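/- Let n, N ≥ 1 and let ρ_0, …, ρ_{n+N−1} be p×p complex matrices with operator norm ‖ρ_k‖ < 1. Let 𝔄_k(z) be the frames built from the full sequence, and let 𝔄̃_k(z) be built from the shifted sequence ρ̃_k := ρ_{k+n} (0 ≤ k < N). Fix z ∈ ℂ, z ≠ −2i, and p×p matrices R, Q such that 𝔄̃_{21}(N,z)R + 𝔄̃_{22}(N,z)Q is invertible; set φ̃ := i(𝔄̃_{11}(N,z)R + 𝔄̃_{12}(N,z)Q)(𝔄̃_{21}(N,z)R + 𝔄̃_{22}(N,z)Q)^{−1}. If moreover 𝔄_{21}(n,z)(−iφ̃) + 𝔄_{22}(n,z) is invertible, then 𝔄_{21}(n+N,z)R + 𝔄_{22}(n+N,z)Q is invertible and the Khrushchev-type formula holds: i(𝔄_{11}(n,z)(−iφ̃) + 𝔄_{12}(n,z))(𝔄_{21}(n,z)(−iφ̃) + 𝔄_{22}(n,z))^{−1} = i(𝔄_{11}(n+N,z)R + 𝔄_{12}(n+N,z)Q)(𝔄_{21}(n+N,z)R + 𝔄_{22}(n+N,z)Q)^{−1}. -/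

import Mathlib

open Matrix
open scoped ComplexOrder

noncomputable section

/-- `X^{-1/2}` for a positive semidefinite matrix `X` (junk value `0` otherwise). -/
def invSqrt {p : ℕ} (X : Matrix (Fin p) (Fin p) ℂ) : Matrix (Fin p) (Fin p) ℂ :=
  open scoped Classical in
  if h : X.PosSemidef then
    ((h.1.eigenvectorUnitary : Matrix (Fin p) (Fin p) ℂ) *
      diagonal ((↑) ∘ (√·) ∘ h.1.eigenvalues) *
      (star h.1.eigenvectorUnitary : Matrix (Fin p) (Fin p) ℂ))⁻¹ else 0

/-- `j = diag{I_p, -I_p}`. -/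
def jmat (p : ℕ) : Matrix (Fin p ⊕ Fin p) (Fin p ⊕ Fin p) ℂ :=
  Matrix.fromBlocks 1 0 0 (-1)

/-- `J = [[0, I_p],[I_p, 0]]`. -/
def Jmat (p : ℕ) : Matrix (Fin p ⊕ Fin p) (Fin p ⊕ Fin p) ℂ :=
  Matrix.fromBlocks 0 1 1 0

/-- `K = (1/√2) [[I_p, -I_p],[I_p, I_p]]`. -/
def Kmat (p : ℕ) : Matrix (Fin p ⊕ Fin p) (Fin p ⊕ Fin p) ℂ :=
  ((Real.sqrt 2 : ℂ))⁻¹ • Matrix.fromBlocks 1 (-1) 1 1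

/-- The Halmos extension `C = D F` of a strictly contractive `p × p` matrix `ρ`. -/
def halmos {p : ℕ} (ρ : Matrix (Fin p) (Fin p) ℂ) :
    Matrix (Fin p ⊕ Fin p) (Fin p ⊕ Fin p) ℂ :=
  Matrix.fromBlocks (invSqrt (1 - ρ * ρᴴ)) 0 0 (invSqrt (1 - ρᴴ * ρ)) *
    Matrix.fromBlocks 1 ρ ρᴴ 1

/-- The fundamental solution `W_k(z)` of the discrete Dirac system built from the
Verblunsky-type coefficients `ρ_0, ρ_1, …` : `W_0(z) = I`,
`W_{k+1}(z) = (I + i z j C_k) W_k(z)`. -/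
def Wsol {p : ℕ} (ρ : ℕ → Matrix (Fin p) (Fin p) ℂ) :
    ℕ → ℂ → Matrix (Fin p ⊕ Fin p) (Fin p ⊕ Fin p) ℂ
  | 0, _ => 1
  | k + 1, z => (1 + (Complex.I * z) • (jmat p * halmos (ρ k))) * Wsol ρ k z

/-- The frame `𝔄_k(z) = (1 - (i/2) z)^{-k} · J j K · W_k(-conj(z)/2)^* · K^* j J`. -/
def frameA {p : ℕ} (ρ : ℕ → Matrix (Fin p) (Fin p) ℂ) (k : ℕ) (z : ℂ) :
    Matrix (Fin p ⊕ Fin p) (Fin p ⊕ Fin p) ℂ :=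
  ((1 - (Complex.I / 2) * z) ^ k)⁻¹ •
    (Jmat p * jmat p * Kmat p * (Wsol ρ k (-(starRingEnd ℂ z) / 2))ᴴ *
      (Kmat p)ᴴ * jmat p * Jmat p)


lemma middle_id (p : ℕ) :
    ((Kmat p)ᴴ * jmat p * Jmat p) * (Jmat p * jmat p * Kmat p) = 1 := by
  have hc : ((Real.sqrt 2 : ℂ))⁻¹ * star ((Real.sqrt 2 : ℂ))⁻¹ = 2⁻¹ := by
    rw [Complex.star_def, map_inv₀, Complex.conj_ofReal, ← mul_inv]
    rw [show ((Real.sqrt 2 : ℂ)) * (Real.sqrt 2 : ℂ) = ((Real.sqrt 2 * Real.sqrt 2 : ℝ) : ℂ) by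
      push_cast; ring, Real.mul_self_sqrt (by norm_num)]
    norm_num
  simp only [Kmat, jmat, Jmat, conjTranspose_smul, fromBlocks_conjTranspose,
    conjTranspose_one, conjTranspose_neg, smul_mul_assoc, mul_smul_comm,
    fromBlocks_multiply, smul_smul]
  simp only [Matrix.mul_one, Matrix.one_mul, Matrix.mul_zero, Matrix.zero_mul,
    Matrix.mul_neg, Matrix.neg_mul, neg_neg, add_zero, zero_add, neg_zero]
  rw [hc]
  rw [show (1 + -1 : Matrix (Fin p) (Fin p) ℂ) = 0 from add_neg_cancel 1,
      show (1 + 1 : Matrix (Fin p) (Fin p) ℂ) = (2:ℂ) • 1 by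
        rw [two_smul]]
  rw [show (fromBlocks ((2:ℂ) • (1 : Matrix (Fin p) (Fin p) ℂ)) 0 0 ((2:ℂ) • 1))
      = (2:ℂ) • fromBlocks 1 0 0 1 by
    rw [Matrix.fromBlocks_smul, smul_zero]]
  rw [smul_smul, fromBlocks_one]
  norm_num

lemma Wsol_shift {p : ℕ} (ρ : ℕ → Matrix (Fin p) (Fin p) ℂ) (n : ℕ) (z : ℂ) :
    ∀ N, Wsol ρ (n + N) z = Wsol (fun k => ρ (k + n)) N z * Wsol ρ n z
  | 0 => by simp [Wsol]
  | N + 1 => by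
    have h1 : n + (N + 1) = (n + N) + 1 := rfl
    rw [h1]
    show (1 + (Complex.I * z) • (jmat p * halmos (ρ (n + N)))) * Wsol ρ (n + N) z = _
    rw [Wsol_shift ρ n z N]
    show _ = (1 + (Complex.I * z) • (jmat p * halmos (ρ (N + n)))) *
      Wsol (fun k => ρ (k + n)) N z * Wsol ρ n z
    rw [Nat.add_comm N n, Matrix.mul_assoc]

lemma frameA_mul {p : ℕ} (ρ : ℕ → Matrix (Fin p) (Fin p) ℂ) (n N : ℕ) (z : ℂ) :
    frameA ρ (n + N) z = frameA ρ n z * frameA (fun k => ρ (k + n)) N z := by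
  set w := -(starRingEnd ℂ z) / 2 with hw
  set M := Jmat p * jmat p * Kmat p with hM
  set M' := (Kmat p)ᴴ * jmat p * Jmat p with hM'
  set X := (Wsol ρ n w)ᴴ with hX
  set Y := (Wsol (fun k => ρ (k + n)) N w)ᴴ with hY
  have hW : (Wsol ρ (n + N) w)ᴴ = X * Y := by
    rw [hX, hY, ← Matrix.conjTranspose_mul, ← Wsol_shift ρ n w N]
  have hmid : M' * M = 1 := middle_id p
  have key : M * (X * Y) * (Kmat p)ᴴ * jmat p * Jmat p
      = (M * X * (Kmat p)ᴴ * jmat p * Jmat p) * (M * Y * (Kmat p)ᴴ * jmat p * Jmat p) := by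
    have h1 : ∀ Z : Matrix (Fin p ⊕ Fin p) (Fin p ⊕ Fin p) ℂ,
        M * Z * (Kmat p)ᴴ * jmat p * Jmat p = M * Z * M' := by
      intro Z
      rw [hM', Matrix.mul_assoc (M * Z), Matrix.mul_assoc (M * Z), Matrix.mul_assoc (Kmat p)ᴴ]
    rw [h1, h1, h1]
    rw [Matrix.mul_assoc (M * X) M', Matrix.mul_assoc M Y M',
      ← Matrix.mul_assoc M' M (Y * M'), hmid, Matrix.one_mul,
      Matrix.mul_assoc M (X * Y) M', Matrix.mul_assoc X Y M',
      Matrix.mul_assoc M X (Y * M')]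
  unfold frameA
  rw [← hw, hW, ← hM]
  rw [show (Wsol ρ n w)ᴴ = X from rfl, show (Wsol (fun k => ρ (k + n)) N w)ᴴ = Y from rfl]
  rw [key, pow_add, mul_inv, ← smul_smul, ← Matrix.mul_smul, ← Matrix.smul_mul]

lemma toBlocks_mul₁₁ {q : Type*} [Fintype q] (A B : Matrix (q ⊕ q) (q ⊕ q) ℂ) :
    (A * B).toBlocks₁₁ = A.toBlocks₁₁ * B.toBlocks₁₁ + A.toBlocks₁₂ * B.toBlocks₂₁ := by
  conv_lhs => rw [← Matrix.fromBlocks_toBlocks A, ← Matrix.fromBlocks_toBlocks B,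
    Matrix.fromBlocks_multiply]
  rfl

lemma toBlocks_mul₁₂ {q : Type*} [Fintype q] (A B : Matrix (q ⊕ q) (q ⊕ q) ℂ) :
    (A * B).toBlocks₁₂ = A.toBlocks₁₁ * B.toBlocks₁₂ + A.toBlocks₁₂ * B.toBlocks₂₂ := by
  conv_lhs => rw [← Matrix.fromBlocks_toBlocks A, ← Matrix.fromBlocks_toBlocks B,
    Matrix.fromBlocks_multiply]
  rfl

lemma toBlocks_mul₂₁ {q : Type*} [Fintype q] (A B : Matrix (q ⊕ q) (q ⊕ q) ℂ) :
    (A * B).toBlocks₂₁ = A.toBlocks₂₁ * B.toBlocks₁₁ + A.toBlocks₂₂ * B.toBlocks₂₁ := by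
  conv_lhs => rw [← Matrix.fromBlocks_toBlocks A, ← Matrix.fromBlocks_toBlocks B,
    Matrix.fromBlocks_multiply]
  rfl

lemma toBlocks_mul₂₂ {q : Type*} [Fintype q] (A B : Matrix (q ⊕ q) (q ⊕ q) ℂ) :
    (A * B).toBlocks₂₂ = A.toBlocks₂₁ * B.toBlocks₁₂ + A.toBlocks₂₂ * B.toBlocks₂₂ := by
  conv_lhs => rw [← Matrix.fromBlocks_toBlocks A, ← Matrix.fromBlocks_toBlocks B,
    Matrix.fromBlocks_multiply]
  rfl

/-- the Khrushchev-type formula: separation of the Verblunsky-type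
coefficients in the linear fractional transformations generated by the frames. -/
theorem khrushchev_type_formula
    {p : ℕ} (hp : 1 ≤ p) (n N : ℕ) (hn : 1 ≤ n) (hN : 1 ≤ N)
    (ρ : ℕ → Matrix (Fin p) (Fin p) ℂ)
    (hρ : ∀ k < n + N, ‖Matrix.toEuclideanCLM (𝕜 := ℂ) (ρ k)‖ < 1)
    (z : ℂ) (hz : z ≠ -2 * Complex.I)
    (R Q : Matrix (Fin p) (Fin p) ℂ)
    (hRQ : IsUnit ((frameA (fun k => ρ (k + n)) N z).toBlocks₂₁ * R +
      (frameA (fun k => ρ (k + n)) N z).toBlocks₂₂ * Q))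
    (φt : Matrix (Fin p) (Fin p) ℂ)
    (hφt : φt = Complex.I •
      (((frameA (fun k => ρ (k + n)) N z).toBlocks₁₁ * R +
          (frameA (fun k => ρ (k + n)) N z).toBlocks₁₂ * Q) *
        ((frameA (fun k => ρ (k + n)) N z).toBlocks₂₁ * R +
          (frameA (fun k => ρ (k + n)) N z).toBlocks₂₂ * Q)⁻¹))
    (hden : IsUnit ((frameA ρ n z).toBlocks₂₁ * (-Complex.I • φt) +
      (frameA ρ n z).toBlocks₂₂)) :
    IsUnit ((frameA ρ (n + N) z).toBlocks₂₁ * R + (frameA ρ (n + N) z).toBlocks₂₂ * Q) ∧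
    Complex.I •
      (((frameA ρ n z).toBlocks₁₁ * (-Complex.I • φt) + (frameA ρ n z).toBlocks₁₂) *
        ((frameA ρ n z).toBlocks₂₁ * (-Complex.I • φt) + (frameA ρ n z).toBlocks₂₂)⁻¹) =
    Complex.I •
      (((frameA ρ (n + N) z).toBlocks₁₁ * R + (frameA ρ (n + N) z).toBlocks₁₂ * Q) *
        ((frameA ρ (n + N) z).toBlocks₂₁ * R + (frameA ρ (n + N) z).toBlocks₂₂ * Q)⁻¹) := by

  set A := frameA ρ n z with hA
  set B := frameA (fun k => ρ (k + n)) N z with hB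
  set U := B.toBlocks₁₁ * R + B.toBlocks₁₂ * Q with hU
  set V := B.toBlocks₂₁ * R + B.toBlocks₂₂ * Q with hV
  have hVu : IsUnit V := hRQ
  have hVdet : IsUnit V.det := (Matrix.isUnit_iff_isUnit_det V).mp hVu
  have hVinv : V⁻¹ * V = 1 := Matrix.nonsing_inv_mul V hVdet
  have hVinv' : V * V⁻¹ = 1 := Matrix.mul_nonsing_inv V hVdet
  have hφ : -Complex.I • φt = U * V⁻¹ := by
    rw [hφt, smul_smul]
    rw [show (-Complex.I * Complex.I : ℂ) = 1 by
      rw [neg_mul, Complex.I_mul_I, neg_neg], one_smul]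
  have hAB : frameA ρ (n + N) z = A * B := frameA_mul ρ n N z
  have hden2 : (frameA ρ (n + N) z).toBlocks₂₁ * R + (frameA ρ (n + N) z).toBlocks₂₂ * Q
      = (A.toBlocks₂₁ * (U * V⁻¹) + A.toBlocks₂₂) * V := by
    rw [hAB, toBlocks_mul₂₁, toBlocks_mul₂₂]
    calc (A.toBlocks₂₁ * B.toBlocks₁₁ + A.toBlocks₂₂ * B.toBlocks₂₁) * R +
          (A.toBlocks₂₁ * B.toBlocks₁₂ + A.toBlocks₂₂ * B.toBlocks₂₂) * Q
        = A.toBlocks₂₁ * U + A.toBlocks₂₂ * V := by rw [hU, hV]; noncomm_ring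
      _ = (A.toBlocks₂₁ * (U * V⁻¹) + A.toBlocks₂₂) * V := by
          rw [Matrix.add_mul, Matrix.mul_assoc A.toBlocks₂₁, Matrix.mul_assoc U, hVinv,
            Matrix.mul_one]
  have hnum2 : (frameA ρ (n + N) z).toBlocks₁₁ * R + (frameA ρ (n + N) z).toBlocks₁₂ * Q
      = (A.toBlocks₁₁ * (U * V⁻¹) + A.toBlocks₁₂) * V := by
    rw [hAB, toBlocks_mul₁₁, toBlocks_mul₁₂]
    calc (A.toBlocks₁₁ * B.toBlocks₁₁ + A.toBlocks₁₂ * B.toBlocks₂₁) * R +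
          (A.toBlocks₁₁ * B.toBlocks₁₂ + A.toBlocks₁₂ * B.toBlocks₂₂) * Q
        = A.toBlocks₁₁ * U + A.toBlocks₁₂ * V := by rw [hU, hV]; noncomm_ring
      _ = (A.toBlocks₁₁ * (U * V⁻¹) + A.toBlocks₁₂) * V := by
          rw [Matrix.add_mul, Matrix.mul_assoc A.toBlocks₁₁, Matrix.mul_assoc U, hVinv,
            Matrix.mul_one]
  rw [hφ] at hden ⊢
  refine ⟨by rw [hden2]; exact hden.mul hVu, ?_⟩
  have hcancel : ∀ X D : Matrix (Fin p) (Fin p) ℂ, (X * V) * (V⁻¹ * D) = X * D := by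
    intro X D
    rw [Matrix.mul_assoc, ← Matrix.mul_assoc V, hVinv', Matrix.one_mul]
  rw [hden2, hnum2, Matrix.mul_inv_rev, hcancel]


end
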